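/- Let n ≥ 1, let F be a field of characteristic ≠ 2 and α ∈ F with 1 + α(n−1) ≠ 0. Then the Matsuo algebra M_α(𝒜_n) over F is unital with identity element u = (1 + α(n−1))⁻¹ Σ_{t ∈ T_n} t, i.e. u·x = x for every x ∈ M_α(𝒜_n). -/

import Mathlib

open Equiv Finsupp

instance {n : ℕ} : DecidablePred (Equiv.Perm.IsSwap : Equiv.Perm (Fin n) → Prop) := by
  intro σ; unfold Equiv.Perm.IsSwap; infer_instance

abbrev Tr (n : ℕ) : Type := {σ : Equiv.Perm (Fin (n + 1)) // σ.IsSwap}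

/-- Two transpositions are collinear when their supports share exactly one point. -/
def Coll {n : ℕ} (s t : Tr n) : Prop :=
  (s.1.support ∩ t.1.support).card = 1

instance {n : ℕ} (s t : Tr n) : Decidable (Coll s t) := by
  unfold Coll; infer_instance

/-- The third point `s·t·s` of the line through collinear transpositions. -/
def wedge {n : ℕ} (s t : Tr n) : Tr n :=
  ⟨s.1 * t.1 * s.1, by
    obtain ⟨x, y, hxy, ht⟩ := t.2
    obtain ⟨a, b, hab, hs⟩ := s.2
    have hinv : s.1⁻¹ = s.1 := by rw [hs]; exact Equiv.swap_inv a b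
    exact ⟨s.1 x, s.1 y, fun h => hxy (s.1.injective h), by
      rw [ht, Equiv.swap_apply_apply, hinv]⟩⟩

section Aux
variable {n : ℕ}

lemma coll_of (s t : Tr n) (z y : Fin (n+1)) (hz : z ∈ t.1.support)
    (hy : y ∉ t.1.support) (hs : s.1 = Equiv.swap z y) : Coll s t := by
  have hzy : z ≠ y := fun h => hy (h ▸ hz)
  have hsupp : s.1.support = {z, y} := by rw [hs]; exact Equiv.Perm.support_swap hzy
  unfold Coll
  rw [hsupp]
  rw [Finset.card_eq_one]
  refine ⟨z, ?_⟩
  ext w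
  simp only [Finset.mem_inter, Finset.mem_insert, Finset.mem_singleton]
  constructor
  · rintro ⟨hw1 | hw1, hw2⟩
    · exact hw1
    · exact absurd (hw1 ▸ hw2) hy
  · rintro rfl; exact ⟨Or.inl rfl, hz⟩

lemma coll_elim {s t : Tr n} (h : Coll s t) :
    ∃ z y, z ∈ t.1.support ∧ y ∉ t.1.support ∧ s.1 = Equiv.swap z y := by
  obtain ⟨x, x', hxx', hs⟩ := s.2
  have hsupp : s.1.support = {x, x'} := by rw [hs]; exact Equiv.Perm.support_swap hxx'
  unfold Coll at h
  rw [Finset.card_eq_one] at h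
  obtain ⟨z, hz⟩ := h
  have hzmem : z ∈ s.1.support ∩ t.1.support := hz ▸ Finset.mem_singleton_self z
  have hzs : z ∈ s.1.support := (Finset.mem_inter.mp hzmem).1
  have hzt : z ∈ t.1.support := (Finset.mem_inter.mp hzmem).2
  rw [hsupp] at hzs
  rcases Finset.mem_insert.mp hzs with rfl | hzx'
  · refine ⟨z, x', hzt, fun hx' => ?_, hs⟩
    have : x' ∈ s.1.support ∩ t.1.support := by
      rw [hsupp]; exact Finset.mem_inter.mpr ⟨by simp, hx'⟩
    rw [hz, Finset.mem_singleton] at this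
    exact hxx' this.symm
  · rw [Finset.mem_singleton] at hzx'
    subst hzx'
    refine ⟨z, x, hzt, fun hx => ?_, by rw [hs, Equiv.swap_comm]⟩
    have : x ∈ s.1.support ∩ t.1.support := by
      rw [hsupp]; exact Finset.mem_inter.mpr ⟨by simp, hx⟩
    rw [hz, Finset.mem_singleton] at this
    exact hxx' this

lemma swap_conj (a b y : Fin (n+1)) (hab : a ≠ b) (hya : y ≠ a) (hyb : y ≠ b) :
    Equiv.swap a y * Equiv.swap a b * Equiv.swap a y = Equiv.swap y b := by
  have h1 : Equiv.swap a y * Equiv.swap a b * (Equiv.swap a y)⁻¹ =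
      Equiv.swap (Equiv.swap a y a) (Equiv.swap a y b) := (Equiv.swap_apply_apply _ _ _).symm
  rw [Equiv.swap_inv] at h1
  rw [h1, Equiv.swap_apply_left, Equiv.swap_apply_of_ne_of_ne (Ne.symm hab) (Ne.symm hyb)]

lemma wedge_eq {s t : Tr n} (h : Coll s t) :
    ∃ z w y, t.1 = Equiv.swap z w ∧ s.1 = Equiv.swap z y ∧ z ≠ w ∧ y ≠ z ∧ y ≠ w ∧
      (wedge s t).1 = Equiv.swap y w ∧ t.1.support = {z, w} := by
  obtain ⟨z, y, hz, hy, hs⟩ := coll_elim h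
  obtain ⟨a, b, hab, ht⟩ := t.2
  have hsupp : t.1.support = {a, b} := by rw [ht]; exact Equiv.Perm.support_swap hab
  have hyz : y ≠ z := fun hh => hy (hh ▸ hz)
  rw [hsupp] at hz hy
  simp only [Finset.mem_insert, Finset.mem_singleton] at hz hy
  push_neg at hy
  have main : ∀ w, t.1 = Equiv.swap z w → z ≠ w → y ≠ w → t.1.support = {z, w} →
      ∃ z' w' y', t.1 = Equiv.swap z' w' ∧ s.1 = Equiv.swap z' y' ∧ z' ≠ w' ∧ y' ≠ z' ∧
        y' ≠ w' ∧ (wedge s t).1 = Equiv.swap y' w' ∧ t.1.support = {z', w'} := by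
    intro w ht' hzw hyw hsupp'
    refine ⟨z, w, y, ht', hs, hzw, hyz, hyw, ?_, hsupp'⟩
    show s.1 * t.1 * s.1 = _
    rw [hs, ht']
    exact swap_conj z w y hzw hyz hyw
  rcases hz with rfl | rfl
  · exact main b ht hab hy.2 hsupp
  · exact main a (by rw [ht, Equiv.swap_comm]) (Ne.symm hab) hy.1
      (by rw [hsupp]; ext u; simp [or_comm])

lemma coll_wedge {s t : Tr n} (h : Coll s t) : Coll (wedge s t) t := by
  obtain ⟨z, w, y, ht, hs, hzw, hyz, hyw, hwedge, hsupp⟩ := wedge_eq h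
  refine coll_of _ _ w y ?_ ?_ (by rw [hwedge, Equiv.swap_comm])
  · rw [hsupp]; simp
  · rw [hsupp]; simp [hyz, hyw]

lemma wedge_wedge {s t : Tr n} (h : Coll s t) : wedge (wedge s t) t = s := by
  obtain ⟨z, w, y, ht, hs, hzw, hyz, hyw, hwedge, hsupp⟩ := wedge_eq h
  apply Subtype.ext
  show (wedge s t).1 * t.1 * (wedge s t).1 = s.1
  rw [hwedge, ht, hs, Equiv.swap_comm y w, Equiv.swap_comm z w, Equiv.swap_comm z y]
  exact swap_conj w z y (Ne.symm hzw) hyw hyz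

lemma coll_ne {s t : Tr n} (h : Coll s t) : s ≠ t := by
  intro hst
  subst hst
  unfold Coll at h
  rw [Finset.inter_self] at h
  obtain ⟨a, b, hab, hs⟩ := s.2
  rw [hs, Equiv.Perm.card_support_swap hab] at h
  exact (by norm_num : (2:ℕ) ≠ 1) h

lemma card_coll (t : Tr n) :
    (Finset.univ.filter (fun s => Coll s t)).card = 2 * (n - 1) := by
  obtain ⟨a, b, hab, ht⟩ := t.2
  have hsupp : t.1.support = {a, b} := by rw [ht]; exact Equiv.Perm.support_swap hab
  have hcard2 : t.1.support.card = 2 := by rw [ht]; exact Equiv.Perm.card_support_swap hab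
  have key : (t.1.support ×ˢ t.1.supportᶜ).card
      = (Finset.univ.filter (fun s => Coll s t)).card := by
    refine Finset.card_bij (fun p hp => (⟨Equiv.swap p.1 p.2, p.1, p.2, ?_, rfl⟩ : Tr n))
      ?_ ?_ ?_
    · rw [Finset.mem_product, Finset.mem_compl] at hp
      exact fun hh => hp.2 (hh ▸ hp.1)
    · intro p hp
      rw [Finset.mem_product, Finset.mem_compl] at hp
      rw [Finset.mem_filter]
      exact ⟨Finset.mem_univ _, coll_of _ t p.1 p.2 hp.1 hp.2 rfl⟩
    · intro p hp q hq heq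
      rw [Finset.mem_product, Finset.mem_compl] at hp hq
      have hp12 : p.1 ≠ p.2 := fun hh => hp.2 (hh ▸ hp.1)
      have hq12 : q.1 ≠ q.2 := fun hh => hq.2 (hh ▸ hq.1)
      have hsw : Equiv.swap p.1 p.2 = Equiv.swap q.1 q.2 := congrArg Subtype.val heq
      have hsups : ({p.1, p.2} : Finset (Fin (n+1))) = {q.1, q.2} := by
        rw [← Equiv.Perm.support_swap hp12, ← Equiv.Perm.support_swap hq12, hsw]
      have h1 : p.1 = q.1 := by
        have : p.1 ∈ ({q.1, q.2} : Finset (Fin (n+1))) := by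
          rw [← hsups]; simp
        rcases Finset.mem_insert.mp this with hh | hh
        · exact hh
        · rw [Finset.mem_singleton] at hh
          exact absurd (hh ▸ hp.1) hq.2
      have h2 : p.2 = q.2 := by
        have : p.2 ∈ ({q.1, q.2} : Finset (Fin (n+1))) := by
          rw [← hsups]; simp
        rcases Finset.mem_insert.mp this with hh | hh
        · exact absurd (hh ▸ hq.1) hp.2
        · exact Finset.mem_singleton.mp hh
      exact Prod.ext h1 h2
    · intro s hs
      rw [Finset.mem_filter] at hs
      obtain ⟨z, y, hz, hy, hseq⟩ := coll_elim hs.2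
      refine ⟨(z, y), ?_, ?_⟩
      · rw [Finset.mem_product, Finset.mem_compl]; exact ⟨hz, hy⟩
      · exact Subtype.ext hseq.symm
  rw [← key, Finset.card_product, hcard2, Finset.card_compl, hcard2]
  simp only [Fintype.card_fin]
  omega

end Aux

variable (F : Type*) [Field F]

/-- Product of two basis points of the Matsuo algebra of the Fischer
space `𝒜_n` of `Sym(n+1)`. -/
noncomputable def pointMul {n : ℕ} (α : F) (s t : Tr n) : Tr n →₀ F :=
  if s = t then Finsupp.single s 1
  else if Coll s t then
    (α / 2) • (Finsupp.single s 1 + Finsupp.single t 1 - Finsupp.single (wedge s t) 1)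
  else 0

/-- The multiplication of the Matsuo algebra `M_α(𝒜_n)`, as a bilinear map on the
free module on the transpositions of `Sym(n+1)`. -/
noncomputable def matsuoMul (n : ℕ) (α : F) :
    (Tr n →₀ F) →ₗ[F] (Tr n →₀ F) →ₗ[F] (Tr n →₀ F) :=
  Finsupp.lsum F fun s =>
    LinearMap.toSpanSingleton F _
      (Finsupp.lsum F fun t => LinearMap.toSpanSingleton F _ (pointMul F α s t))


section Alg
variable {n : ℕ} {F : Type*} [Field F]

lemma sum_pointMul (hn : 1 ≤ n) (hchar : (2 : F) ≠ 0) (α : F) (t : Tr n) :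
    ∑ s : Tr n, pointMul F α s t = (1 + α * ((n : F) - 1)) • Finsupp.single t 1 := by
  have hsplit : ∀ s : Tr n, pointMul F α s t =
      (if s = t then Finsupp.single t (1:F) else 0) +
      (if Coll s t then (α/2) • (Finsupp.single s 1 + Finsupp.single t 1
        - Finsupp.single (wedge s t) 1) else 0) := by
    intro s
    unfold pointMul
    by_cases h1 : s = t
    · subst h1
      have hnc : ¬ Coll s s := fun h => coll_ne h rfl
      rw [if_pos rfl, if_pos rfl, if_neg hnc, add_zero]
    · rw [if_neg h1, if_neg h1, zero_add]
  rw [Finset.sum_congr rfl (fun s _ => hsplit s), Finset.sum_add_distrib]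
  have h1 : ∑ s : Tr n, (if s = t then Finsupp.single t (1:F) else 0)
      = Finsupp.single t 1 := by
    rw [Finset.sum_ite_eq' Finset.univ t (fun _ => Finsupp.single t (1:F))]
    simp
  have h2 : ∑ s : Tr n, (if Coll s t then (α/2) • (Finsupp.single s (1:F) + Finsupp.single t 1
        - Finsupp.single (wedge s t) 1) else 0)
      = (α * ((n : F) - 1)) • Finsupp.single t (1:F) := by
    rw [← Finset.sum_filter]
    set C := Finset.univ.filter (fun s => Coll s t) with hC
    have hcancel : ∑ s ∈ C, Finsupp.single (wedge s t) (1:F)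
        = ∑ s ∈ C, Finsupp.single s (1:F) := by
      refine Finset.sum_nbij' (fun s => wedge s t) (fun s => wedge s t) ?_ ?_ ?_ ?_ ?_
      · intro s hs
        rw [hC, Finset.mem_filter] at hs ⊢
        exact ⟨Finset.mem_univ _, coll_wedge hs.2⟩
      · intro s hs
        rw [hC, Finset.mem_filter] at hs ⊢
        exact ⟨Finset.mem_univ _, coll_wedge hs.2⟩
      · intro s hs
        rw [hC, Finset.mem_filter] at hs
        exact wedge_wedge hs.2
      · intro s hs
        rw [hC, Finset.mem_filter] at hs
        exact wedge_wedge hs.2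
      · intro s hs; rfl
    have hsum : ∑ s ∈ C, (Finsupp.single s (1:F) + Finsupp.single t 1
        - Finsupp.single (wedge s t) (1:F)) = C.card • Finsupp.single t (1:F) := by
      rw [Finset.sum_sub_distrib, Finset.sum_add_distrib, hcancel, Finset.sum_const]
      abel
    rw [← Finset.smul_sum, hsum]
    have hcard : C.card = 2 * (n - 1) := card_coll t
    rw [hcard, ← Nat.cast_smul_eq_nsmul F, smul_smul]
    congr 1
    have : ((2 * (n - 1) : ℕ) : F) = 2 * ((n : F) - 1) := by
      push_cast [Nat.cast_sub hn]
      ring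
    rw [this]
    field_simp
  rw [h1, h2, add_smul, one_smul]

lemma matsuoMul_single_single (α : F) (s t : Tr n) (c d : F) :
    matsuoMul F n α (Finsupp.single s c) (Finsupp.single t d)
      = (c * d) • pointMul F α s t := by
  rw [matsuoMul, Finsupp.lsum_single, LinearMap.toSpanSingleton_apply, LinearMap.smul_apply,
    Finsupp.lsum_single, LinearMap.toSpanSingleton_apply, smul_smul]

theorem matsuo_An_unital' (hn : 1 ≤ n)
    (hchar : (2 : F) ≠ 0) (α : F) (hα : 1 + α * ((n : F) - 1) ≠ 0) :
    ∀ x : Tr n →₀ F,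
      matsuoMul F n α
        ((1 + α * ((n : F) - 1))⁻¹ • ∑ t : Tr n, Finsupp.single t (1 : F)) x = x := by
  have key : matsuoMul F n α
      ((1 + α * ((n : F) - 1))⁻¹ • ∑ t : Tr n, Finsupp.single t (1 : F))
      = LinearMap.id := by
    apply Finsupp.lhom_ext
    intro t c
    rw [map_smul, map_sum, LinearMap.smul_apply, LinearMap.sum_apply, LinearMap.id_coe, id_eq]
    have hterm : ∀ s : Tr n, (matsuoMul F n α (Finsupp.single s 1)) (Finsupp.single t c)
        = c • pointMul F α s t := by
      intro s; rw [matsuoMul_single_single, one_mul]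
    rw [Finset.sum_congr rfl (fun s _ => hterm s), ← Finset.smul_sum,
      sum_pointMul hn hchar α t, smul_smul, smul_smul]
    have : (1 + α * ((n : F) - 1))⁻¹ * c * (1 + α * ((n : F) - 1)) = c := by
      field_simp
    rw [this, Finsupp.smul_single, smul_eq_mul, mul_one]
  intro x
  rw [key, LinearMap.id_coe, id_eq]

end Alg

/-- for `n ≥ 1` and `1 + α(n-1) ≠ 0`, the Matsuo algebra `M_α(𝒜_n)` over a
field of characteristic `≠ 2` is unital with identity
`(1 + α(n-1))⁻¹ ∑_{t ∈ T_n} t`. -/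
theorem matsuo_An_unital (n : ℕ) (hn : 1 ≤ n) (F : Type*) [Field F]
    (hchar : (2 : F) ≠ 0) (α : F) (hα : 1 + α * ((n : F) - 1) ≠ 0) :
    ∀ x : Tr n →₀ F,
      matsuoMul F n α
        ((1 + α * ((n : F) - 1))⁻¹ • ∑ t : Tr n, Finsupp.single t (1 : F)) x = x := by
  exact matsuo_An_unital' hn hchar α hα
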